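/- Let σ > 0, let X be a random variable with the centered Gaussian law N(0,σ²), and let l : ℝ² → ℝ be continuously differentiable with bounded partial derivatives. Then the function f_l(x₁, x₂) := −σ⁻² ∫₀¹ (2√(t(1−t)))⁻¹ · E[X · l(√t x₁ + √(1−t) X, x₂)] dt satisfies the uniform bound sup_{(x₁,x₂)∈ℝ²} |f_l(x₁, x₂)| ≤ sup_{(x₁,x₂)∈ℝ²} |∂₁l(x₁, x₂)|. -/

import Mathlib

open MeasureTheory ProbabilityTheory Real
open scoped NNReal ENNReal

/-- Partial derivative of `f : ℝ × ℝ → ℝ` in its first variable. -/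
noncomputable def pderiv1 (f : ℝ × ℝ → ℝ) (p : ℝ × ℝ) : ℝ :=
  deriv (fun y => f (y, p.2)) p.1

/-- Partial derivative of `f : ℝ × ℝ → ℝ` in its second variable. -/
noncomputable def pderiv2 (f : ℝ × ℝ → ℝ) (p : ℝ × ℝ) : ℝ :=
  deriv (fun y => f (p.1, y)) p.2

/-- The Stein solution
`f_l(x₁,x₂) = −σ⁻² ∫₀¹ (2√(t(1−t)))⁻¹ E[X l(√t x₁ + √(1−t) X, x₂)] dt`. -/
noncomputable def steinSol {Ω : Type*} [MeasurableSpace Ω] (P : Measure Ω)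
    (X : Ω → ℝ) (σ : ℝ) (l : ℝ × ℝ → ℝ) : ℝ × ℝ → ℝ :=
  fun p => -(σ ^ 2)⁻¹ *
    ∫ t in (0:ℝ)..1, (2 * Real.sqrt (t * (1 - t)))⁻¹ *
      ∫ ω, X ω * l (Real.sqrt t * p.1 + Real.sqrt (1 - t) * X ω, p.2) ∂P



lemma gaussPDF_eq (v : ℝ≥0) :
    gaussianPDFReal 0 v = fun x => (Real.sqrt (2 * π * v))⁻¹ * Real.exp (-(2*(v:ℝ))⁻¹ * x^2) := by
  funext x
  unfold gaussianPDFReal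
  congr 1
  congr 1
  rw [sub_zero, div_eq_mul_inv]
  ring

lemma integral_id_gauss (v : ℝ≥0) : ∫ x, x ∂(gaussianReal 0 v) = 0 := by
  have h1 : (NNReal.mk ((-1:ℝ)^2) (sq_nonneg _)) = 1 := by ext; norm_num
  have h := gaussianReal_map_const_mul (μ := 0) (v := v) (-1)
  rw [h1, one_mul, mul_zero] at h
  have h2 : ∫ x, x ∂(gaussianReal 0 v) = ∫ x, (-1) * x ∂(gaussianReal 0 v) := by
    conv_lhs => rw [← h]
    rw [integral_map (f := fun x : ℝ => x) (measurable_const_mul (-1)).aemeasurable measurable_id.aestronglyMeasurable]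
  simp only [neg_mul, one_mul] at h2
  rw [integral_neg] at h2
  linarith

lemma integrable_id_gauss (v : ℝ≥0) : Integrable (fun x => x) (gaussianReal 0 v) := by
  by_cases hv : v = 0
  · rw [hv, gaussianReal_zero_var]
    exact (integrable_const _).congr (ae_eq_dirac (fun x : ℝ => x)).symm
  rw [gaussianReal_of_var_ne_zero _ hv]
  have hmeas : Measurable fun x => (gaussianPDFReal 0 v x).toNNReal :=
    (measurable_gaussianPDFReal 0 v).real_toNNReal
  rw [show gaussianPDF 0 v = fun x => ((gaussianPDFReal 0 v x).toNNReal : ℝ≥0∞) from rfl,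
    integrable_withDensity_iff_integrable_smul hmeas]
  have hb : (0:ℝ) < (2*(v:ℝ))⁻¹ := by positivity
  have : (fun x => (gaussianPDFReal 0 v x).toNNReal • x)
      = fun x => (Real.sqrt (2 * π * v))⁻¹ * (x * Real.exp (-(2*(v:ℝ))⁻¹ * x^2)) := by
    funext x
    rw [NNReal.smul_def, Real.coe_toNNReal _ (gaussianPDFReal_nonneg 0 v x), gaussPDF_eq,
      smul_eq_mul]
    ring
  rw [this]
  exact (integrable_mul_exp_neg_mul_sq hb).const_mul _

lemma integrable_sq_gauss (v : ℝ≥0) : Integrable (fun x => x^2) (gaussianReal 0 v) := by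
  by_cases hv : v = 0
  · rw [hv, gaussianReal_zero_var]
    exact (integrable_const _).congr (ae_eq_dirac (fun x : ℝ => x^2)).symm
  rw [gaussianReal_of_var_ne_zero _ hv]
  have hmeas : Measurable fun x => (gaussianPDFReal 0 v x).toNNReal :=
    (measurable_gaussianPDFReal 0 v).real_toNNReal
  rw [show gaussianPDF 0 v = fun x => ((gaussianPDFReal 0 v x).toNNReal : ℝ≥0∞) from rfl,
    integrable_withDensity_iff_integrable_smul hmeas]
  have hb : (0:ℝ) < (2*(v:ℝ))⁻¹ := by positivity
  have h2 : Integrable fun x : ℝ => x ^ (2:ℝ) * Real.exp (-(2*(v:ℝ))⁻¹ * x ^ 2) :=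
    integrable_rpow_mul_exp_neg_mul_sq hb (by norm_num)
  simp_rw [Real.rpow_two] at h2
  have : (fun x => (gaussianPDFReal 0 v x).toNNReal • x^2)
      = fun x => (Real.sqrt (2 * π * v))⁻¹ * (x^2 * Real.exp (-(2*(v:ℝ))⁻¹ * x^2)) := by
    funext x
    rw [NNReal.smul_def, Real.coe_toNNReal _ (gaussianPDFReal_nonneg 0 v x), gaussPDF_eq,
      smul_eq_mul]
    ring
  rw [this]
  exact h2.const_mul _

lemma integral_sq_gauss (v : ℝ≥0) : ∫ x, x^2 ∂(gaussianReal 0 v) = (v:ℝ) := by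
  by_cases hv : v = 0
  · rw [hv, gaussianReal_zero_var, integral_dirac]
    norm_num [hv]
  rw [gaussianReal_of_var_ne_zero _ hv]
  have hmeas : Measurable fun x => (gaussianPDFReal 0 v x).toNNReal :=
    (measurable_gaussianPDFReal 0 v).real_toNNReal
  rw [show gaussianPDF 0 v = fun x => ((gaussianPDFReal 0 v x).toNNReal : ℝ≥0∞) from rfl,
    integral_withDensity_eq_integral_smul hmeas]
  have hb : (0:ℝ) < (2*(v:ℝ))⁻¹ := by positivity
  have hrw : (fun x => (gaussianPDFReal 0 v x).toNNReal • x^2)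
      = fun x => (Real.sqrt (2 * π * v))⁻¹ * (x^2 * Real.exp (-(2*(v:ℝ))⁻¹ * x^2)) := by
    funext x
    rw [NNReal.smul_def, Real.coe_toNNReal _ (gaussianPDFReal_nonneg 0 v x), gaussPDF_eq,
      smul_eq_mul]
    ring
  rw [hrw, integral_const_mul]
  have habs : ∫ x : ℝ, x^2 * Real.exp (-(2*(v:ℝ))⁻¹ * x^2)
      = 2 * ∫ x in Set.Ioi (0:ℝ), x^2 * Real.exp (-(2*(v:ℝ))⁻¹ * x^2) := by
    rw [← integral_comp_abs (f := fun x => x^2 * Real.exp (-(2*(v:ℝ))⁻¹ * x^2))]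
    congr 1
    funext x
    rw [sq_abs]
  rw [habs]
  have hIoi : ∫ x in Set.Ioi (0:ℝ), x^2 * Real.exp (-(2*(v:ℝ))⁻¹ * x^2)
      = ((2*(v:ℝ))⁻¹) ^ (-(3:ℝ)/2) * (1/2) * Real.Gamma (3/2) := by
    have h := integral_rpow_mul_exp_neg_mul_rpow (p := 2) (q := 2) (b := (2*(v:ℝ))⁻¹)
      (by norm_num) (by norm_num) hb
    simp_rw [Real.rpow_two] at h
    rw [show (-(2+1)/2 : ℝ) = (-(3:ℝ)/2) by norm_num,
      show ((2+1)/2 : ℝ) = (3/2:ℝ) by norm_num] at h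
    exact h
  rw [hIoi]
  have hΓ : Real.Gamma (3/2) = (1/2) * Real.sqrt π := by
    rw [show (3/2 : ℝ) = 1/2 + 1 by norm_num, Real.Gamma_add_one (by norm_num),
      Real.Gamma_one_half_eq]
  rw [hΓ]
  have hvpos : (0:ℝ) < (v:ℝ) := lt_of_le_of_ne (v.coe_nonneg) (by exact_mod_cast (Ne.symm hv))
  have h2v : (0:ℝ) < 2*(v:ℝ) := by linarith
  have hinv : ((2*(v:ℝ))⁻¹) ^ (-(3:ℝ)/2) = (2*(v:ℝ)) ^ ((3:ℝ)/2) := by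
    rw [Real.inv_rpow h2v.le, ← Real.rpow_neg h2v.le]
    norm_num
  rw [hinv]
  have hsplit : Real.sqrt (2 * π * v) = (2*(v:ℝ)) ^ ((1:ℝ)/2) * Real.sqrt π := by
    rw [show 2 * π * (v:ℝ) = (2*(v:ℝ)) * π by ring, Real.sqrt_mul h2v.le,
      Real.sqrt_eq_rpow]
  rw [hsplit]
  have hrpow : (2*(v:ℝ)) ^ ((3:ℝ)/2) = (2*(v:ℝ)) ^ ((1:ℝ)/2) * (2*(v:ℝ)) := by
    rw [show ((3:ℝ)/2) = (1:ℝ)/2 + 1 by norm_num, Real.rpow_add h2v, Real.rpow_one]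
  rw [hrpow]
  have h1 : ((2*(v:ℝ)) ^ ((1:ℝ)/2)) ≠ 0 := by positivity
  have h2 : Real.sqrt π ≠ 0 := by positivity
  field_simp


lemma inner_bound {Ω : Type*} [MeasurableSpace Ω] (P : Measure Ω) [IsProbabilityMeasure P]
    (X : Ω → ℝ) (hX : Measurable X) (hXint : Integrable X P)
    (hmean : ∫ ω, X ω ∂P = 0) (hX2int : Integrable (fun ω => X ω ^ 2) P)
    {C : ℝ} (hC0 : 0 ≤ C) {φ : ℝ → ℝ} (hφc : Continuous φ)
    (hφ : LipschitzWith C.toNNReal φ) (a b : ℝ) (hb : 0 ≤ b) :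
    |∫ ω, X ω * φ (a + b * X ω) ∂P| ≤ C * b * ∫ ω, X ω ^ 2 ∂P := by
  have hlip : ∀ x : ℝ, |φ (a + b * x) - φ a| ≤ C * (b * |x|) := by
    intro x
    have h := hφ.dist_le_mul (a + b * x) a
    rw [Real.dist_eq, Real.dist_eq, Real.coe_toNNReal _ hC0] at h
    simpa [abs_mul, abs_of_nonneg hb] using h
  have hbound : ∀ ω, ‖X ω * (φ (a + b * X ω) - φ a)‖ ≤ C * b * X ω ^ 2 := by
    intro ω
    rw [Real.norm_eq_abs, abs_mul]
    calc |X ω| * |φ (a + b * X ω) - φ a| ≤ |X ω| * (C * (b * |X ω|)) := by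
          exact mul_le_mul_of_nonneg_left (hlip (X ω)) (abs_nonneg _)
      _ = C * b * |X ω| ^ 2 := by ring
      _ = C * b * X ω ^ 2 := by rw [sq_abs]
  have hmeas : AEStronglyMeasurable (fun ω => X ω * (φ (a + b * X ω) - φ a)) P := by
    apply Measurable.aestronglyMeasurable
    exact hX.mul ((hφc.measurable.comp ((measurable_const.add (hX.const_mul b)))).sub
      measurable_const)
  have hgint : Integrable (fun ω => C * b * X ω ^ 2) P := hX2int.const_mul _
  have hf1int : Integrable (fun ω => X ω * (φ (a + b * X ω) - φ a)) P :=
    hgint.mono' hmeas (ae_of_all _ hbound)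
  have hsplit : ∫ ω, X ω * φ (a + b * X ω) ∂P
      = ∫ ω, X ω * (φ (a + b * X ω) - φ a) ∂P := by
    have : (fun ω => X ω * φ (a + b * X ω))
        = fun ω => X ω * (φ (a + b * X ω) - φ a) + φ a * X ω := by
      funext ω; ring
    rw [this, integral_add hf1int (hXint.const_mul (φ a)), integral_const_mul, hmean,
      mul_zero, add_zero]
  rw [hsplit, ← Real.norm_eq_abs]
  calc ‖∫ ω, X ω * (φ (a + b * X ω) - φ a) ∂P‖
      ≤ ∫ ω, C * b * X ω ^ 2 ∂P := norm_integral_le_of_norm_le hgint (ae_of_all _ hbound)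
    _ = C * b * ∫ ω, X ω ^ 2 ∂P := integral_const_mul _ _

/-- **First bound of Lemma `SolStein0`**: `sup |f_l| ≤ sup |∂₁ l|`, stated as: any
uniform bound on `∂₁ l` is a uniform bound on `f_l`. -/
theorem steinSol_sup_bound
    {Ω : Type*} [MeasurableSpace Ω] (P : Measure Ω) [IsProbabilityMeasure P]
    (σ : ℝ) (hσ : 0 < σ) (X : Ω → ℝ) (hX : Measurable X)
    (hlaw : Measure.map X P = gaussianReal 0 (Real.toNNReal (σ ^ 2)))
    (l : ℝ × ℝ → ℝ) (hl : ContDiff ℝ 1 l)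
    (hb1 : ∃ C, ∀ p, |pderiv1 l p| ≤ C) (hb2 : ∃ C, ∀ p, |pderiv2 l p| ≤ C) :
    ∀ C : ℝ, (∀ p, |pderiv1 l p| ≤ C) → ∀ p, |steinSol P X σ l p| ≤ C := by
  intro C hC p
  obtain ⟨x₁, x₂⟩ := p
  set v : ℝ≥0 := Real.toNNReal (σ ^ 2) with hvdef
  have hσ2 : (0:ℝ) < σ ^ 2 := by positivity
  have hv : (v:ℝ) = σ ^ 2 := Real.coe_toNNReal _ hσ2.le
  have hC0 : 0 ≤ C := (abs_nonneg _).trans (hC 0)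
  -- moments of X
  have hXint : Integrable X P := by
    have h := integrable_id_gauss v
    rw [← hlaw] at h
    exact (integrable_map_measure measurable_id.aestronglyMeasurable hX.aemeasurable).mp h
  have hX2int : Integrable (fun ω => X ω ^ 2) P := by
    have h := integrable_sq_gauss v
    rw [← hlaw] at h
    exact (integrable_map_measure (by fun_prop) hX.aemeasurable).mp h
  have hmean : ∫ ω, X ω ∂P = 0 := by
    have h := integral_map (μ := P) (f := fun x : ℝ => x) hX.aemeasurable
      measurable_id.aestronglyMeasurable
    rw [hlaw, integral_id_gauss] at h
    exact h.symm
  have hsq : ∫ ω, X ω ^ 2 ∂P = σ ^ 2 := by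
    have h := integral_map (μ := P) (f := fun x : ℝ => x ^ 2) hX.aemeasurable (by fun_prop)
    rw [hlaw, integral_sq_gauss, hv] at h
    exact h.symm
  -- Lipschitz property of the first slice
  have hdiff : Differentiable ℝ (fun u => l (u, x₂)) := by
    intro u
    exact ((hl.differentiable one_ne_zero) (u, x₂)).comp u
      (differentiableAt_id.prodMk (differentiableAt_const x₂))
  have hLip : LipschitzWith C.toNNReal (fun u => l (u, x₂)) := by
    apply lipschitzWith_of_nnnorm_deriv_le hdiff
    intro u
    have h := hC (u, x₂)
    rw [← NNReal.coe_le_coe, coe_nnnorm, Real.coe_toNNReal _ hC0, Real.norm_eq_abs]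
    exact h
  have hφc : Continuous (fun u => l (u, x₂)) :=
    hl.continuous.comp (continuous_id.prodMk continuous_const)
  -- pointwise bound on inner integral
  have hIb : ∀ t : ℝ,
      |∫ ω, X ω * l (Real.sqrt t * x₁ + Real.sqrt (1 - t) * X ω, x₂) ∂P|
        ≤ C * Real.sqrt (1 - t) * σ ^ 2 := by
    intro t
    have h := inner_bound P X hX hXint hmean hX2int hC0 hφc hLip
      (Real.sqrt t * x₁) (Real.sqrt (1 - t)) (Real.sqrt_nonneg _)
    rw [hsq] at h
    exact h
  -- the dominating function
  have hGint : IntervalIntegrable (fun t => C * σ ^ 2 / 2 * t ^ (-(1:ℝ)/2)) volume 0 1 :=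
    (intervalIntegral.intervalIntegrable_rpow' (by norm_num)).const_mul _
  have hGval : ∫ t in (0:ℝ)..1, C * σ ^ 2 / 2 * t ^ (-(1:ℝ)/2) = C * σ ^ 2 := by
    rw [intervalIntegral.integral_const_mul, integral_rpow (Or.inl (by norm_num))]
    rw [show (-(1:ℝ)/2 + 1) = (1:ℝ)/2 by norm_num, Real.one_rpow,
      Real.zero_rpow (by norm_num)]
    ring
  have hae : ∀ᵐ t ∂(volume.restrict (Set.uIoc (0:ℝ) 1)),
      ‖(2 * Real.sqrt (t * (1 - t)))⁻¹ *
        ∫ ω, X ω * l (Real.sqrt t * x₁ + Real.sqrt (1 - t) * X ω, x₂) ∂P‖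
        ≤ C * σ ^ 2 / 2 * t ^ (-(1:ℝ)/2) := by
    rw [Set.uIoc_of_le (zero_le_one)]
    refine (ae_restrict_mem measurableSet_Ioc).mono fun t ht => ?_
    obtain ⟨ht0, ht1⟩ := ht
    have h1t : 0 ≤ 1 - t := by linarith
    rw [Real.norm_eq_abs, abs_mul, abs_of_nonneg (by positivity : (0:ℝ) ≤ (2 * Real.sqrt (t * (1 - t)))⁻¹)]
    have step1 : (2 * Real.sqrt (t * (1 - t)))⁻¹ *
        |∫ ω, X ω * l (Real.sqrt t * x₁ + Real.sqrt (1 - t) * X ω, x₂) ∂P|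
        ≤ (2 * Real.sqrt (t * (1 - t)))⁻¹ * (C * Real.sqrt (1 - t) * σ ^ 2) :=
      mul_le_mul_of_nonneg_left (hIb t) (by positivity)
    refine step1.trans ?_
    rw [Real.sqrt_mul ht0.le]
    rcases eq_or_lt_of_le ht1 with h | h
    · subst h
      norm_num [Real.one_rpow]
      positivity
    · have hs : 0 < Real.sqrt (1 - t) := Real.sqrt_pos.mpr (by linarith)
      have hst : 0 < Real.sqrt t := Real.sqrt_pos.mpr ht0
      have : (2 * (Real.sqrt t * Real.sqrt (1 - t)))⁻¹ * (C * Real.sqrt (1 - t) * σ ^ 2)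
          = C * σ ^ 2 / 2 * (Real.sqrt t)⁻¹ := by
        field_simp
      rw [this]
      have hrpow : t ^ (-(1:ℝ)/2) = (Real.sqrt t)⁻¹ := by
        rw [show (-(1:ℝ)/2) = -((1:ℝ)/2) by norm_num, Real.rpow_neg ht0.le,
          ← Real.sqrt_eq_rpow]
      rw [hrpow]
  -- put everything together
  have hnorm : ‖∫ t in (0:ℝ)..1, (2 * Real.sqrt (t * (1 - t)))⁻¹ *
      ∫ ω, X ω * l (Real.sqrt t * x₁ + Real.sqrt (1 - t) * X ω, x₂) ∂P‖
      ≤ C * σ ^ 2 := by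
    calc _ ≤ |∫ t in (0:ℝ)..1, C * σ ^ 2 / 2 * t ^ (-(1:ℝ)/2)| :=
        intervalIntegral.norm_integral_le_abs_of_norm_le hae hGint
      _ = C * σ ^ 2 := by rw [hGval]; exact abs_of_nonneg (by positivity)
  show |-(σ ^ 2)⁻¹ * ∫ t in (0:ℝ)..1, (2 * Real.sqrt (t * (1 - t)))⁻¹ *
      ∫ ω, X ω * l (Real.sqrt t * x₁ + Real.sqrt (1 - t) * X ω, x₂) ∂P| ≤ C
  rw [abs_mul, abs_neg, abs_inv, abs_of_nonneg hσ2.le]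
  rw [← Real.norm_eq_abs (∫ t in (0:ℝ)..1, _)]
  calc (σ ^ 2)⁻¹ * ‖∫ t in (0:ℝ)..1, (2 * Real.sqrt (t * (1 - t)))⁻¹ *
        ∫ ω, X ω * l (Real.sqrt t * x₁ + Real.sqrt (1 - t) * X ω, x₂) ∂P‖
      ≤ (σ ^ 2)⁻¹ * (C * σ ^ 2) := by
        exact mul_le_mul_of_nonneg_left hnorm (by positivity)
    _ = C := by field_simp
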